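/- Let (G,u) and (H,v) be Archimedean abelian ℓ-groups with strong units and let ι : G → H be an injective group homomorphism preserving ⊓ and ⊔ with ι(u) = v. Then the following are equivalent: (a) the map sending a polar P of H to P ∩ ι(G) is a bijection from the polars of H onto the polars of the ℓ-subgroup ι(G), with inverse sending a polar Q of ι(G) to Q^⊥⊥ computed in H; (b) for every y ∈ H with y > 0 there exist x ∈ G and an integer n > 0 such that 0 < ι(x) ≤ n·y. (These are the characterizations of ι being an essential extension.) -/
import Mathlib


/-- The absolute value `|g| = (g ⊔ 0) + ((-g) ⊔ 0)` in a lattice-ordered abelian group. -/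
def absl {A : Type*} [Lattice A] [AddCommGroup A] (g : A) : A :=
  (g ⊔ 0) + (-g ⊔ 0)

/-- The polar `T^⊥ = {x : |x| ⊓ |t| = 0 for all t ∈ T}` computed in the whole group. -/
def polar {A : Type*} [Lattice A] [AddCommGroup A] (T : Set A) : Set A :=
  {x : A | ∀ t ∈ T, absl x ⊓ absl t = 0}

/-- The polar of `T` computed relative to the ℓ-subgroup (carrier) `S`. -/
def polarIn {A : Type*} [Lattice A] [AddCommGroup A] (S T : Set A) : Set A :=
  {x ∈ S | ∀ t ∈ T, absl x ⊓ absl t = 0}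

/-- `P` is a polar of the whole group: `P = P^⊥⊥`. -/
def IsPolar {A : Type*} [Lattice A] [AddCommGroup A] (P : Set A) : Prop :=
  P = polar (polar P)

/-- `Q` is a polar of the ℓ-subgroup with carrier `S`: `Q = Q^⊥⊥` computed in `S`. -/
def IsPolarIn {A : Type*} [Lattice A] [AddCommGroup A] (S Q : Set A) : Prop :=
  Q = polarIn S (polarIn S Q)

/-- `A` is Archimedean: whenever `0 ≤ n • g ≤ h` for all integers `n ≥ 1`, then `g = 0`. -/
def IsArch (A : Type*) [Lattice A] [AddCommGroup A] : Prop :=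
  ∀ g h : A, (∀ n : ℕ, 1 ≤ n → 0 ≤ n • g ∧ n • g ≤ h) → g = 0

section Aux

set_option linter.unusedSectionVars false

variable {A : Type*} [Lattice A] [AddCommGroup A] [CovariantClass A A (· + ·) (· ≤ ·)]

lemma absl_nonneg' (g : A) : 0 ≤ absl g := add_nonneg le_sup_right le_sup_right

lemma absl_of_nonneg' {g : A} (h : 0 ≤ g) : absl g = g := by
  unfold absl
  rw [sup_eq_left.2 h, sup_eq_right.2 (neg_nonpos.2 h), add_zero]

lemma absl_eq_zero' {g : A} (h : absl g = 0) : g = 0 := by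
  have h' : g ⊔ 0 + (-g ⊔ 0) = 0 := h
  have hp : (0:A) ≤ g ⊔ 0 := le_sup_right
  have hn : (0:A) ≤ -g ⊔ 0 := le_sup_right
  have h1 : g ⊔ 0 = -(-g ⊔ 0) := eq_neg_of_add_eq_zero_left h'
  have h3 : g ⊔ 0 = 0 := le_antisymm (h1 ▸ neg_nonpos.2 hn) hp
  have h4 : -g ⊔ 0 = 0 := by rwa [h3, zero_add] at h'
  exact le_antisymm (sup_eq_right.1 h3) (neg_nonpos.1 (sup_eq_right.1 h4))

lemma inf_add_le' {a b c : A} (ha : 0 ≤ a) (hb : 0 ≤ b) (hc : 0 ≤ c) :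
    a ⊓ (b + c) ≤ a ⊓ b + a ⊓ c := by
  have hd1 : a ⊓ (b + c) - a ⊓ b ≤ a :=
    le_trans (sub_le_self_iff _ |>.2 (le_inf ha hb)) inf_le_left
  have hd2 : a ⊓ (b + c) - a ⊓ b ≤ c := by
    rw [sub_le_iff_le_add]
    have h5 : c + a ⊓ b = (c + a) ⊓ (c + b) := add_inf a b c
    rw [h5]
    exact le_inf (le_trans inf_le_left (le_add_of_nonneg_left hc))
      (le_trans inf_le_right (le_of_eq (add_comm b c)))
  exact sub_le_iff_le_add'.1 (le_inf hd1 hd2)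

lemma inf_nsmul_eq_zero' {a b : A} (ha : 0 ≤ a) (hb : 0 ≤ b) (h : a ⊓ b = 0) :
    ∀ n : ℕ, a ⊓ n • b = 0 := by
  intro n
  induction n with
  | zero => simpa using inf_eq_right.2 ha
  | succ n ih =>
    have hle : a ⊓ (n + 1) • b ≤ a ⊓ n • b + a ⊓ b := by
      rw [succ_nsmul]
      exact inf_add_le' ha (nsmul_nonneg hb n) hb
    rw [ih, h, add_zero] at hle
    exact le_antisymm hle (le_inf ha (nsmul_nonneg hb (n+1)))

lemma polar_anti' {T T' : Set A} (h : T ⊆ T') : polar T' ⊆ polar T :=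
  fun _x hx t ht => hx t (h ht)

lemma subset_polar_polar' (T : Set A) : T ⊆ polar (polar T) :=
  fun x hx t ht => by rw [inf_comm]; exact ht x hx

lemma polar_polar_polar' (T : Set A) : polar (polar (polar T)) = polar T :=
  Set.Subset.antisymm (polar_anti' (subset_polar_polar' T)) (subset_polar_polar' (polar T))

lemma zero_mem_polar' (T : Set A) : (0 : A) ∈ polar T := by
  intro t _
  rw [absl_of_nonneg' (le_refl (0:A))]
  exact inf_eq_left.2 (absl_nonneg' t)

lemma polar_polar_zero' : polar (polar ({0} : Set A)) = {0} := by
  ext x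
  constructor
  · intro hx
    have hxp : x ∈ polar ({0} : Set A) := by
      intro t ht
      rw [Set.mem_singleton_iff] at ht
      subst ht
      rw [absl_of_nonneg' (le_refl (0:A))]
      exact inf_eq_right.2 (absl_nonneg' x)
    have := hx x hxp
    rw [inf_idem] at this
    exact Set.mem_singleton_iff.2 (absl_eq_zero' this)
  · intro hx
    rw [Set.mem_singleton_iff] at hx
    subst hx
    exact zero_mem_polar' _

lemma polarIn_eq' (S T : Set A) : polarIn S T = S ∩ polar T := rfl

end Aux

/-- Characterisations of essential extensions of Archimedean ℓ-groups with strong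
unit: the polar-bijection condition (a) is equivalent to the density-type
condition (b). -/
theorem statement7 {G H : Type*}
    [Lattice G] [AddCommGroup G] [CovariantClass G G (· + ·) (· ≤ ·)]
    [Lattice H] [AddCommGroup H] [CovariantClass H H (· + ·) (· ≤ ·)]
    (hGarch : IsArch G) (hHarch : IsArch H)
    (u : G) (hu0 : 0 ≤ u) (hu : ∀ g : G, ∃ n : ℕ, 1 ≤ n ∧ g ≤ n • u)
    (v : H) (hv0 : 0 ≤ v) (hv : ∀ h : H, ∃ n : ℕ, 1 ≤ n ∧ h ≤ n • v)
    (ι : G → H) (hinj : Function.Injective ι)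
    (hadd : ∀ a b : G, ι (a + b) = ι a + ι b)
    (hinf : ∀ a b : G, ι (a ⊓ b) = ι a ⊓ ι b)
    (hsup : ∀ a b : G, ι (a ⊔ b) = ι a ⊔ ι b)
    (huv : ι u = v) :
    ((∀ P : Set H, IsPolar P → IsPolarIn (Set.range ι) (P ∩ Set.range ι)) ∧
     (∀ P : Set H, IsPolar P → polar (polar (P ∩ Set.range ι)) = P) ∧
     (∀ Q : Set H, IsPolarIn (Set.range ι) Q →
        IsPolar (polar (polar Q)) ∧ polar (polar Q) ∩ Set.range ι = Q))
    ↔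
    (∀ y : H, 0 < y → ∃ (x : G) (n : ℕ), 0 < n ∧ 0 < ι x ∧ ι x ≤ n • y) := by
  have hι0 : ι 0 = 0 := by
    have h00 := hadd 0 0
    rw [add_zero] at h00
    have : ι 0 + ι 0 = ι 0 + 0 := by rw [add_zero]; exact h00.symm
    exact add_left_cancel this
  have hιneg : ∀ x : G, ι (-x) = -ι x := by
    intro x
    have := hadd x (-x)
    rw [add_neg_cancel, hι0] at this
    exact (neg_eq_of_add_eq_zero_right this.symm).symm
  have hιabs : ∀ x : G, absl (ι x) = ι (absl x) := by
    intro x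
    unfold absl
    rw [hadd, hsup, hsup, hι0, hιneg]
  set S := Set.range ι with hS
  constructor
  · -- (a) → (b)
    rintro ⟨_, h2, _⟩ y hy
    by_contra hcon
    push_neg at hcon
    have hknot : ∃ k : ℕ, 1 ≤ k ∧ ¬ (k • y ≤ v) := by
      by_contra hk
      push_neg at hk
      have := hHarch y v (fun n hn => ⟨nsmul_nonneg hy.le n, hk n hn⟩)
      exact absurd this (ne_of_gt hy)
    obtain ⟨k, hk1, hkv⟩ := hknot
    set w : H := (v - k • y) ⊔ 0 with hw
    set z : H := (k • y - v) ⊔ 0 with hz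
    have hw0 : 0 ≤ w := le_sup_right
    have hz0 : 0 ≤ z := le_sup_right
    have hzw : z ⊓ w = 0 := by
      have := posPart_inf_negPart_eq_zero (k • y - v)
      rw [posPart_def, negPart_def, neg_sub] at this
      exact this
    have hzpos : 0 < z := by
      rcases lt_or_eq_of_le hz0 with h | h
      · exact h
      · exfalso
        apply hkv
        rw [← sub_nonpos]
        exact sup_eq_right.1 h.symm
    have hvle : v ≤ w + k • y := sub_le_iff_le_add.1 le_sup_left
    set P : Set H := polar {w} with hP
    have hPpolar : IsPolar P := (polar_polar_polar' {w}).symm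
    have hPS : P ∩ S = {0} := by
      ext h
      constructor
      · rintro ⟨hp, x, hx⟩
        have habs : absl h ⊓ w = 0 := by
          have := hp w rfl
          rwa [absl_of_nonneg' hw0] at this
        obtain ⟨m, hm1, hm2⟩ := hv (absl h)
        have hle1 : absl h ≤ m • w + (m * k) • y := by
          calc absl h ≤ m • v := hm2
            _ ≤ m • (w + k • y) := nsmul_le_nsmul_right hvle m
            _ = m • w + (m * k) • y := by
                rw [nsmul_add, mul_comm m k, mul_nsmul]
        have hstep : absl h ⊓ (m • w + (m * k) • y) ≤
            absl h ⊓ m • w + absl h ⊓ (m * k) • y :=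
          inf_add_le' (absl_nonneg' h) (nsmul_nonneg hw0 m)
            (nsmul_nonneg hy.le (m * k))
        have hzero : absl h ⊓ m • w = 0 :=
          inf_nsmul_eq_zero' (absl_nonneg' h) hw0 habs m
        have hle2 : absl h ≤ (m * k) • y := by
          calc absl h = absl h ⊓ (m • w + (m * k) • y) := (inf_eq_left.2 hle1).symm
            _ ≤ absl h ⊓ m • w + absl h ⊓ (m * k) • y := hstep
            _ = absl h ⊓ (m * k) • y := by rw [hzero, zero_add]
            _ ≤ (m * k) • y := inf_le_right
        have hzeroabs : absl h = 0 := by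
          by_contra hne
          have hpos : 0 < absl h := lt_of_le_of_ne (absl_nonneg' h) (Ne.symm hne)
          have heq : absl h = ι (absl x) := by rw [← hx, hιabs]
          exact hcon (absl x) (m * k)
            (Nat.mul_pos hm1 hk1) (heq ▸ hpos) (heq ▸ hle2)
        exact Set.mem_singleton_iff.2 (absl_eq_zero' hzeroabs)
      · intro hh
        rw [Set.mem_singleton_iff] at hh
        subst hh
        exact ⟨zero_mem_polar' _, ⟨0, hι0⟩⟩
    have hPeq := h2 P hPpolar
    rw [hPS, polar_polar_zero'] at hPeq
    have hzP : z ∈ P := by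
      intro t ht
      rw [Set.mem_singleton_iff] at ht
      subst ht
      rw [absl_of_nonneg' hz0, absl_of_nonneg' hw0]
      exact hzw
    rw [← hPeq] at hzP
    exact absurd (Set.mem_singleton_iff.1 hzP) (ne_of_gt hzpos)
  · -- (b) → (a)
    intro hb
    have claimI : ∀ R : Set H, polar (polar R ∩ S) = polar (polar R) := by
      intro R
      apply Set.Subset.antisymm
      · intro h hh t ht
        by_contra hne
        have hc0 : 0 ≤ absl h ⊓ absl t := le_inf (absl_nonneg' h) (absl_nonneg' t)
        have hcpos : 0 < absl h ⊓ absl t := lt_of_le_of_ne hc0 (Ne.symm hne)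
        obtain ⟨x, n, hn, hx, hxc⟩ := hb _ hcpos
        have hsR : ι x ∈ polar R := by
          intro r hr
          rw [absl_of_nonneg' hx.le]
          have htr : absl r ⊓ n • absl t = 0 :=
            inf_nsmul_eq_zero' (absl_nonneg' r) (absl_nonneg' t)
              (by rw [inf_comm]; exact ht r hr) n
          have hle : ι x ≤ n • absl t :=
            le_trans hxc (nsmul_le_nsmul_right inf_le_right n)
          have hh2 : ι x ⊓ absl r ≤ n • absl t ⊓ absl r :=
            inf_le_inf_right _ hle
          rw [inf_comm (n • absl t) (absl r), htr] at hh2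
          exact le_antisymm hh2 (le_inf hx.le (absl_nonneg' r))
        have hmem := hh (ι x) ⟨hsR, ⟨x, rfl⟩⟩
        rw [absl_of_nonneg' hx.le] at hmem
        have h3 : ι x ⊓ n • absl h = 0 :=
          inf_nsmul_eq_zero' hx.le (absl_nonneg' h)
            (by rw [inf_comm]; exact hmem) n
        have hle : ι x ≤ n • absl h :=
          le_trans hxc (nsmul_le_nsmul_right inf_le_left n)
        rw [inf_eq_left.2 hle] at h3
        exact absurd h3 (ne_of_gt hx)
      · exact polar_anti' Set.inter_subset_left
    refine ⟨?_, ?_, ?_⟩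
    · intro P hPp
      have hP : P = polar (polar P) := hPp
      have step1 : polar (P ∩ S) = polar P := by
        conv_lhs => rw [hP]
        rw [claimI (polar P), polar_polar_polar']
      show P ∩ S = polarIn S (polarIn S (P ∩ S))
      rw [polarIn_eq', polarIn_eq', step1, Set.inter_comm S (polar P), claimI P, ← hP]
      exact Set.inter_comm P S
    · intro P hPp
      have hP : P = polar (polar P) := hPp
      have step1 : polar (P ∩ S) = polar P := by
        conv_lhs => rw [hP]
        rw [claimI (polar P), polar_polar_polar']
      rw [step1, ← hP]
    · intro Q hQp
      have hQ : Q = S ∩ polar (S ∩ polar Q) := hQp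
      refine ⟨(polar_polar_polar' (polar Q)).symm, ?_⟩
      have e1 : polar (polar Q) = polar (S ∩ polar Q) := by
        rw [Set.inter_comm S (polar Q), claimI Q]
      rw [e1, Set.inter_comm]
      exact hQ.symm
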